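/- The relation ≼ is a partial order on [0,1]: it is reflexive (s ≼ s for every s), antisymmetric (s ≼ t and t ≼ s imply s = t), and transitive (s ≼ t and t ≼ u imply s ≼ u). -/
import Mathlib


open Set Filter

/-- The infimum `I_s^t` of `f` over the interval `[s, t]`. -/
noncomputable def infIcc (f : ℝ → ℝ) (s t : ℝ) : ℝ := sInf (f '' Set.Icc s t)

/-- The genealogical relation `s ≼ t` associated with the excursion-type function `f`,
where `fl` is the left-limit function of `f` (with the convention `fl 0 = 0`):
`s ≼ t ↔ s ≤ t ∧ f(s-) ≤ I_s^t`. -/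
def Prec (f fl : ℝ → ℝ) (s t : ℝ) : Prop := s ≤ t ∧ fl s ≤ infIcc f s t

/-- The jump `Δ_t = f(t) - f(t-)` of `f` at `t` (with the convention `fl 0 = 0`
this gives `Δ_0 = 0` for `f 0 = 0`). -/
def jump (f fl : ℝ → ℝ) (t : ℝ) : ℝ := f t - fl t

/-- The position `x_s^t = I_s^t - f(s-)` of the ancestral line of `t` in the loop at `s`. -/
noncomputable def xpos (f fl : ℝ → ℝ) (s t : ℝ) : ℝ := infIcc f s t - fl s

/-- Distance on the cycle of length `D`: `δ_D(a,b) = min (|a-b|, D - |a-b|)`. -/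
def cycleDist (D a b : ℝ) : ℝ := min |a - b| (D - |a - b|)

/-- `d₀(s,t) = ∑_{s ≺ r ≼ t} δ_{Δ_r}(0, x_r^t)`. -/
noncomputable def dZero (f fl : ℝ → ℝ) (s t : ℝ) : ℝ :=
  ∑' r : {r : ℝ // Prec f fl s r ∧ s ≠ r ∧ Prec f fl r t},
    cycleDist (jump f fl r.1) 0 (xpos f fl r.1 t)

/-- The most recent common ancestor `s ∧ t` of `s` and `t`: the greatest common
`≼`-lower bound of `s` and `t` in `[0,1]`, realized as the supremum of the set of
common lower bounds. -/
noncomputable def mca (f fl : ℝ → ℝ) (s t : ℝ) : ℝ :=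
  sSup {r : ℝ | r ∈ Set.Icc (0:ℝ) 1 ∧ Prec f fl r s ∧ Prec f fl r t}

/-- The looptree pseudo-distance
`d(s,t) = δ_{Δ_{s∧t}}(x_{s∧t}^s, x_{s∧t}^t) + d₀(s∧t, s) + d₀(s∧t, t)`. -/
noncomputable def looptreeDist (f fl : ℝ → ℝ) (s t : ℝ) : ℝ :=
  cycleDist (jump f fl (mca f fl s t)) (xpos f fl (mca f fl s t) s) (xpos f fl (mca f fl s t) t)
    + dZero f fl (mca f fl s t) s + dZero f fl (mca f fl s t) t

/-- the relation ≼ is a partial order on [0,1]: reflexive, antisymmetric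
and transitive. -/
theorem prec_isPartialOrder (f fl : ℝ → ℝ)
    (hf_right : ∀ t ∈ Set.Ico (0:ℝ) 1, Filter.Tendsto f (nhdsWithin t (Set.Ici t)) (nhds (f t)))
    (hf_left : ∀ t ∈ Set.Ioc (0:ℝ) 1, Filter.Tendsto f (nhdsWithin t (Set.Iio t)) (nhds (fl t)))
    (hfl0 : fl 0 = 0)
    (hf_nonneg : ∀ t ∈ Set.Icc (0:ℝ) 1, 0 ≤ f t)
    (hf_jump : ∀ t ∈ Set.Icc (0:ℝ) 1, fl t ≤ f t)
    (hf0 : f 0 = 0) (hf1 : f 1 = 0) :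
    (∀ s ∈ Set.Icc (0:ℝ) 1, Prec f fl s s) ∧
    (∀ s ∈ Set.Icc (0:ℝ) 1, ∀ t ∈ Set.Icc (0:ℝ) 1,
      Prec f fl s t → Prec f fl t s → s = t) ∧
    (∀ s ∈ Set.Icc (0:ℝ) 1, ∀ t ∈ Set.Icc (0:ℝ) 1, ∀ u ∈ Set.Icc (0:ℝ) 1,
      Prec f fl s t → Prec f fl t u → Prec f fl s u) := by
  have bdd : ∀ a b : ℝ, 0 ≤ a → b ≤ 1 → BddBelow (f '' Set.Icc a b) := by
    intro a b ha hb
    exact ⟨0, fun y ⟨x, hx, hxy⟩ => hxy ▸ hf_nonneg x ⟨ha.trans hx.1, hx.2.trans hb⟩⟩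
  refine ⟨?_, ?_, ?_⟩
  · intro s hs
    refine ⟨le_refl s, ?_⟩
    rw [infIcc, Set.Icc_self, Set.image_singleton, csInf_singleton]
    exact hf_jump s hs
  · intro s _ t _ h1 h2
    exact le_antisymm h1.1 h2.1
  · intro s hs t ht u hu h1 h2
    refine ⟨h1.1.trans h2.1, ?_⟩
    rcases eq_or_lt_of_le h1.1 with rfl | hst
    · exact h2.2
    · have hflt : infIcc f s t ≤ fl t := by
        have h0t : t ∈ Set.Ioc (0:ℝ) 1 := ⟨hs.1.trans_lt hst, ht.2⟩
        refine ge_of_tendsto (hf_left t h0t) ?_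
        filter_upwards [eventually_mem_nhdsWithin,
          mem_nhdsWithin_of_mem_nhds (isOpen_Ioi.mem_nhds hst)] with x hx1 hx2
        exact csInf_le (bdd s t hs.1 ht.2) ⟨x, ⟨le_of_lt hx2, le_of_lt hx1⟩, rfl⟩
      rw [infIcc]
      refine le_csInf ⟨f s, s, ⟨le_refl s, h1.1.trans h2.1⟩, rfl⟩ ?_
      rintro y ⟨x, hx, rfl⟩
      rcases le_total x t with hxt | htx
      · exact h1.2.trans (csInf_le (bdd s t hs.1 ht.2) ⟨x, ⟨hx.1, hxt⟩, rfl⟩)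
      · calc fl s ≤ infIcc f s t := h1.2
          _ ≤ fl t := hflt
          _ ≤ infIcc f t u := h2.2
          _ ≤ f x := csInf_le (bdd t u ht.1 hu.2) ⟨x, ⟨htx, hx.2⟩, rfl⟩
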